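/- For every real p ≥ 4, cos(π·(1 − 1/p)/p) ≤ 1 − (1 − cos(π/p))^(p/(p−2)). -/

import Mathlib

open Real

lemma one_sub_cos_eq (θ : ℝ) : 1 - Real.cos θ = 2 * Real.sin (θ/2) ^ 2 := by
  have h := Real.cos_two_mul' (θ/2)
  rw [show (2:ℝ) * (θ/2) = θ by ring] at h
  have h2 := Real.sin_sq_add_cos_sq (θ/2)
  linarith

theorem stmt_3 (p : ℝ) (hp : 4 ≤ p) :
    Real.cos (π * (1 - 1 / p) / p) ≤ 1 - (1 - Real.cos (π / p)) ^ (p / (p - 2)) := by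
  have hp0 : (0:ℝ) < p := by linarith
  have hπ := Real.pi_pos
  set x : ℝ := π / p with hxdef
  set l : ℝ := 1 - 1 / p with hldef
  have hl0 : 0 < l := by
    have : 1 / p ≤ 1 / 4 := by
      apply div_le_div_of_nonneg_left (by norm_num) (by norm_num) hp
    simp only [hldef]; linarith
  have hl1 : l ≤ 1 := by
    have : 0 < 1 / p := by positivity
    simp only [hldef]; linarith
  have hx0 : 0 < x := by positivity
  have hx4 : x ≤ π / 4 := by
    apply div_le_div_of_nonneg_left (le_of_lt hπ) (by norm_num) hp
  have hx2 : x < π / 2 := lt_of_le_of_lt hx4 (by linarith)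
  have hcx1 : Real.cos x < 1 := by
    have := Real.cos_lt_cos_of_nonneg_of_le_pi (le_refl 0) (by linarith : x ≤ π) hx0
    simpa using this
  have hbase : 0 < 1 - Real.cos x := by linarith
  -- Step 1: 1 - cos x ≤ l ^ (p - 2)
  have hstep1 : 1 - Real.cos x ≤ l ^ (p - 2 : ℝ) := by
    have hA : 1 - Real.cos x ≤ 1 - Real.sqrt 2 / 2 := by
      have : Real.cos (π/4) ≤ Real.cos x := by
        apply Real.cos_le_cos_of_nonneg_of_le_pi (le_of_lt hx0) (by linarith) hx4
      rw [Real.cos_pi_div_four] at this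
      linarith
    have hB : 1 - Real.sqrt 2 / 2 ≤ Real.exp (-1) := by
      have h2 : (1.4 : ℝ) ≤ Real.sqrt 2 := by
        rw [show (1.4:ℝ) = Real.sqrt (1.4^2) by rw [Real.sqrt_sq]; norm_num]
        apply Real.sqrt_le_sqrt; norm_num
      have he : Real.exp 1 < 2.7182818286 := Real.exp_one_lt_d9
      have he0 : (0:ℝ) < Real.exp 1 := Real.exp_pos 1
      have : Real.exp (-1) = 1 / Real.exp 1 := by
        rw [Real.exp_neg]; ring
      rw [this]
      have : (1:ℝ) / 2.7182818286 ≤ 1 / Real.exp 1 := by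
        apply div_le_div_of_nonneg_left (by norm_num) he0 (le_of_lt he)
      nlinarith
    have hC : Real.exp (-1) ≤ l ^ (p - 2 : ℝ) := by
      rw [Real.rpow_def_of_pos hl0]
      apply Real.exp_le_exp.mpr
      have hp2 : (0:ℝ) < p - 2 := by linarith
      have hp1 : (0:ℝ) < p - 1 := by linarith
      have hlog : Real.log (1/l) ≤ 1/l - 1 := Real.log_le_sub_one_of_pos (by positivity)
      have hlogl : -Real.log l ≤ 1 / l - 1 := by
        simpa [Real.log_inv, one_div] using hlog
      have hlinv : (1:ℝ) / l = p / (p - 1) := by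
        rw [hldef]; field_simp
      have hlog2 : -Real.log l ≤ 1 / (p - 1) := by
        rw [hlinv] at hlogl
        have h4 : p / (p - 1) - 1 = 1 / (p - 1) := by field_simp; ring
        linarith
      have h5 : (p - 2) * (1 / (p - 1)) ≤ 1 := by
        rw [mul_one_div, div_le_one hp1]; linarith
      nlinarith [mul_le_mul_of_nonneg_left hlog2 (le_of_lt hp2)]
    linarith
  -- Step 2: (1 - cos x) ^ (2/(p-2)) ≤ l ^ 2
  have hp2 : (0:ℝ) < p - 2 := by linarith
  have hexp0 : (0:ℝ) ≤ 2 / (p - 2) := by positivity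
  have hstep2 : (1 - Real.cos x) ^ (2 / (p - 2) : ℝ) ≤ l ^ (2:ℝ) := by
    calc (1 - Real.cos x) ^ (2 / (p - 2) : ℝ)
        ≤ (l ^ (p - 2 : ℝ)) ^ (2 / (p - 2) : ℝ) :=
          Real.rpow_le_rpow (le_of_lt hbase) hstep1 hexp0
      _ = l ^ (2:ℝ) := by
          rw [← Real.rpow_mul (le_of_lt hl0)]
          congr 1
          field_simp
  -- Step 3: split exponent
  have hsplit : (1 - Real.cos x) ^ (p / (p - 2) : ℝ)
      = (1 - Real.cos x) * (1 - Real.cos x) ^ (2 / (p - 2) : ℝ) := by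
    have : p / (p - 2) = 1 + 2 / (p - 2) := by field_simp; ring
    rw [this, Real.rpow_add hbase, Real.rpow_one]
  -- Step 4: concavity: sin (l * (x/2)) ≥ l * sin (x/2)
  have hconc : l * Real.sin (x/2) ≤ Real.sin (l * (x/2)) := by
    have hmem1 : x/2 ∈ Set.Icc (0:ℝ) π := ⟨by linarith, by linarith⟩
    have hmem0 : (0:ℝ) ∈ Set.Icc (0:ℝ) π := ⟨le_refl _, le_of_lt hπ⟩
    have h := strictConcaveOn_sin_Icc.concaveOn.2 hmem1 hmem0 (le_of_lt hl0)
      (by linarith : (0:ℝ) ≤ 1 - l) (by ring)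
    simp only [smul_eq_mul, mul_zero, add_zero, Real.sin_zero] at h
    linarith
  -- Step 5: l^2 * (1 - cos x) ≤ 1 - cos (l * x)
  have hsin0 : 0 ≤ Real.sin (x/2) := Real.sin_nonneg_of_nonneg_of_le_pi (by linarith) (by linarith)
  have hstep5 : l ^ (2:ℝ) * (1 - Real.cos x) ≤ 1 - Real.cos (l * x) := by
    rw [one_sub_cos_eq x, one_sub_cos_eq (l * x)]
    have h1 : l * x / 2 = l * (x/2) := by ring
    rw [h1]
    have hsq : (l * Real.sin (x/2))^2 ≤ Real.sin (l * (x/2))^2 := by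
      apply pow_le_pow_left₀ (by positivity) hconc
    have hl2 : l ^ (2:ℝ) = l * l := by
      rw [show (2:ℝ) = ((2:ℕ):ℝ) by norm_num, Real.rpow_natCast]; ring
    rw [hl2]
    nlinarith
  -- combine
  have hfinal : (1 - Real.cos x) ^ (p / (p - 2) : ℝ) ≤ 1 - Real.cos (l * x) := by
    rw [hsplit]
    calc (1 - Real.cos x) * (1 - Real.cos x) ^ (2 / (p - 2) : ℝ)
        ≤ (1 - Real.cos x) * l ^ (2:ℝ) :=
          mul_le_mul_of_nonneg_left hstep2 (le_of_lt hbase)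
      _ = l ^ (2:ℝ) * (1 - Real.cos x) := by ring
      _ ≤ 1 - Real.cos (l * x) := hstep5
  have harg : π * (1 - 1/p) / p = l * x := by
    rw [hldef, hxdef]; ring
  rw [harg]
  linarith
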